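/- Let A ∈ ℝ^{d×d} be stable with spectral radius ρ(A) < 1, and define ‖A‖_{H∞} := max_{ω∈[0,2π]} ‖(e^{iω}I − A)⁻¹‖_op. For any ρ with ρ(A) ≤ ρ < 1, τ(A, ρ) := sup_{k ≥ 0} ‖Aᵏ‖_op ρ^{−k} satisfies τ(A, ρ) ≤ ‖ρ⁻¹A‖_{H∞}, i.e. the transient constant is bounded by the H-infinity norm of the rescaled matrix ρ⁻¹A. -/

import Mathlib

open Matrix

/-- The ℓ₂ → ℓ₂ operator (spectral) norm of a matrix. -/
noncomputable def opNorm {𝕜 : Type*} [RCLike 𝕜] {m n : Type*} [Fintype m] [Fintype n]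
    [DecidableEq n] (M : Matrix m n 𝕜) : ℝ :=
  ‖(Matrix.toEuclideanLin M).toContinuousLinearMap‖

set_option linter.unusedSectionVars false
set_option maxHeartbeats 1000000
open Complex Filter Topology
open scoped NNReal ENNReal


section Abstract
variable {𝔸 : Type*} [NormedRing 𝔸] [NormedAlgebra ℂ 𝔸] [CompleteSpace 𝔸]

/-- The Neumann-series candidate for the resolvent `(e^{iω} - T)⁻¹`. -/
noncomputable def resAux (T : 𝔸) (ω : ℝ) : 𝔸 :=
  ∑' n : ℕ, (Complex.exp (-(ω * I))) ^ (n + 1) • T ^ n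

variable {T : 𝔸} {C r : ℝ}

lemma summable_aux (hr0 : 0 ≤ r) (hr1 : r < 1) (hC : ∀ n, ‖T ^ n‖ ≤ C * r ^ n)
    (e : ℕ → ℂ) (he : ∀ n, ‖e n‖ = 1) : Summable (fun n => e n • T ^ n) := by
  refine Summable.of_norm_bounded (g := fun n => C * r ^ n)
    ((summable_geometric_of_lt_one hr0 hr1).mul_left C) (fun n => ?_)
  rw [norm_smul, he n, one_mul]; exact hC n

lemma norm_exp_real_mul_I_pow (x : ℝ) (n : ℕ) : ‖(Complex.exp (-(x * I))) ^ n‖ = 1 := by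
  rw [norm_pow]
  have h : -((x:ℂ) * I) = ((-x : ℝ) : ℂ) * I := by push_cast; ring
  rw [h, Complex.norm_exp_ofReal_mul_I, one_pow]

lemma resolvent_mul (hr0 : 0 ≤ r) (hr1 : r < 1) (hC : ∀ n, ‖T ^ n‖ ≤ C * r ^ n) (ω : ℝ) :
    (Complex.exp (ω * I) • (1:𝔸) - T) * resAux T ω = 1 ∧
      resAux T ω * (Complex.exp (ω * I) • (1:𝔸) - T) = 1 := by
  set u : ℂ := Complex.exp (ω * I) with hu
  set v : ℂ := Complex.exp (-(ω * I)) with hv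
  have huv : u * v = 1 := by
    rw [hu, hv, ← Complex.exp_add, add_neg_cancel, Complex.exp_zero]
  have hvu : v * u = 1 := by rw [mul_comm]; exact huv
  have hs : Summable (fun n => v ^ (n+1) • T ^ n) :=
    summable_aux hr0 hr1 hC _ (fun n => norm_exp_real_mul_I_pow ω (n+1))
  have ha : Summable (fun n : ℕ => v ^ n • T ^ n) :=
    summable_aux hr0 hr1 hC _ (fun n => norm_exp_real_mul_I_pow ω n)
  have ha' : Summable (fun n : ℕ => v ^ (n+1) • T ^ (n+1)) := by
    have := (summable_nat_add_iff 1).mpr ha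
    simpa using this
  have hterm1 : ∀ n : ℕ, (u • (1:𝔸) - T) * (v ^ (n+1) • T ^ n)
      = v ^ n • T ^ n - v ^ (n+1) • T ^ (n+1) := by
    intro n
    have h1 : (u • (1:𝔸)) * (v ^ (n+1) • T ^ n) = (u * v ^ (n+1)) • T ^ n := by
      rw [smul_mul_assoc, one_mul, smul_smul]
    have h2 : u * v ^ (n+1) = v ^ n := by
      rw [pow_succ, ← mul_assoc, mul_comm u, mul_assoc, huv, mul_one]
    rw [sub_mul, h1, h2, mul_smul_comm, ← pow_succ']
  have hterm2 : ∀ n : ℕ, (v ^ (n+1) • T ^ n) * (u • (1:𝔸) - T)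
      = v ^ n • T ^ n - v ^ (n+1) • T ^ (n+1) := by
    intro n
    have h1 : (v ^ (n+1) • T ^ n) * (u • (1:𝔸)) = (u * v ^ (n+1)) • T ^ n := by
      rw [mul_smul_comm, smul_mul_assoc, mul_one, smul_smul, mul_comm u]
    have h2 : u * v ^ (n+1) = v ^ n := by
      rw [pow_succ, ← mul_assoc, mul_comm u, mul_assoc, huv, mul_one]
    rw [mul_sub, h1, h2, smul_mul_assoc, ← pow_succ]
  have htel : ∑' n : ℕ, (v ^ n • T ^ n - v ^ (n+1) • T ^ (n+1)) = 1 := by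
    rw [Summable.tsum_sub ha ha']
    have h0 := Summable.tsum_eq_zero_add ha
    rw [h0]
    simp
  constructor
  · calc (u • (1:𝔸) - T) * resAux T ω
        = ∑' n : ℕ, (u • (1:𝔸) - T) * (v ^ (n+1) • T ^ n) := (hs.tsum_mul_left _).symm
      _ = ∑' n : ℕ, (v ^ n • T ^ n - v ^ (n+1) • T ^ (n+1)) := by
          exact tsum_congr hterm1
      _ = 1 := htel
  · calc resAux T ω * (u • (1:𝔸) - T)
        = ∑' n : ℕ, (v ^ (n+1) • T ^ n) * (u • (1:𝔸) - T) := (hs.tsum_mul_right _).symm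
      _ = ∑' n : ℕ, (v ^ n • T ^ n - v ^ (n+1) • T ^ (n+1)) := tsum_congr hterm2
      _ = 1 := htel

lemma ring_inverse_eq_resAux (hr0 : 0 ≤ r) (hr1 : r < 1) (hC : ∀ n, ‖T ^ n‖ ≤ C * r ^ n)
    (ω : ℝ) :
    Ring.inverse (Complex.exp (ω * I) • (1:𝔸) - T) = resAux T ω := by
  obtain ⟨h1, h2⟩ := resolvent_mul hr0 hr1 hC (T := T) ω
  exact Ring.inverse_unit ⟨_, resAux T ω, h1, h2⟩

lemma norm_resAux_le (hr0 : 0 ≤ r) (hr1 : r < 1) (hC : ∀ n, ‖T ^ n‖ ≤ C * r ^ n) (ω : ℝ) :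
    ‖resAux T ω‖ ≤ C / (1 - r) := by
  have hC0 : 0 ≤ C := by
    have := hC 0
    simp at this
    exact le_trans (norm_nonneg _) this
  have hs : Summable (fun n : ℕ => ‖(Complex.exp (-(ω * I))) ^ (n+1) • T ^ n‖) := by
    refine Summable.of_nonneg_of_le (fun n => norm_nonneg _) (fun n => ?_)
      ((summable_geometric_of_lt_one hr0 hr1).mul_left C)
    rw [norm_smul, norm_exp_real_mul_I_pow, one_mul]; exact hC n
  refine le_trans (norm_tsum_le_tsum_norm hs) ?_
  have h2 : ∑' n : ℕ, ‖(Complex.exp (-(ω * I))) ^ (n+1) • T ^ n‖ ≤ ∑' n : ℕ, C * r ^ n := by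
    refine Summable.tsum_le_tsum (fun n => ?_) hs ((summable_geometric_of_lt_one hr0 hr1).mul_left C)
    rw [norm_smul, norm_exp_real_mul_I_pow, one_mul]; exact hC n
  refine h2.trans ?_
  rw [tsum_mul_left, tsum_geometric_of_lt_one hr0 hr1, div_eq_mul_inv]



lemma root_sum (N : ℕ) (hN : 0 < N) (a : ℤ) :
    ∑ j ∈ Finset.range N, Complex.exp (((a : ℝ) * (2 * Real.pi / N) : ℝ) * I) ^ j
      = if (N:ℤ) ∣ a then (N:ℂ) else 0 := by
  set w : ℂ := Complex.exp (((a : ℝ) * (2 * Real.pi / N) : ℝ) * I) with hw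
  have hN0 : (N:ℂ) ≠ 0 := Nat.cast_ne_zero.mpr hN.ne'
  have hwN : w ^ N = 1 := by
    rw [hw, ← Complex.exp_nat_mul]
    have : (N:ℂ) * (((a : ℝ) * (2 * Real.pi / N) : ℝ) * I) = (a:ℂ) * (2 * Real.pi * I) := by
      push_cast
      field_simp
    rw [this]
    exact_mod_cast Complex.exp_int_mul_two_pi_mul_I a
  by_cases hdvd : (N:ℤ) ∣ a
  · obtain ⟨m, hm⟩ := hdvd
    have hw1 : w = 1 := by
      rw [hw]
      have : (((a : ℝ) * (2 * Real.pi / N) : ℝ) : ℂ) * I = (m:ℂ) * (2 * Real.pi * I) := by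
        push_cast [hm]
        field_simp
      rw [this]
      exact_mod_cast Complex.exp_int_mul_two_pi_mul_I m
    rw [if_pos ⟨m, hm⟩]
    simp [hw1]
  · have hw1 : w ≠ 1 := by
      intro h
      rw [hw, Complex.exp_eq_one_iff] at h
      obtain ⟨m, hm⟩ := h
      apply hdvd
      have hreal : (a:ℝ) * (2 * Real.pi / N) = (m:ℝ) * (2 * Real.pi) := by
        have h2 : (((a : ℝ) * (2 * Real.pi / N) : ℝ) : ℂ) = (((m:ℝ) * (2 * Real.pi) : ℝ) : ℂ) := by
          apply mul_right_cancel₀ Complex.I_ne_zero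
          rw [hm]; push_cast; ring
        exact_mod_cast h2
      have hNr : (N:ℝ) ≠ 0 := Nat.cast_ne_zero.mpr hN.ne'
      have hπ : Real.pi ≠ 0 := Real.pi_ne_zero
      have h3 : (a:ℝ) * (2*Real.pi/N) * (N / (2*Real.pi)) = (m:ℝ)*(2*Real.pi) * (N/(2*Real.pi)) := by
        rw [hreal]
      have h4 : (a:ℝ) = (m:ℝ) * N := by
        have h2pi : (2*Real.pi) ≠ 0 := by positivity
        apply mul_right_cancel₀ h2pi
        field_simp at h3
        linear_combination (2*Real.pi) * h3
      have h5 : (a:ℝ) = (((N:ℤ) * m : ℤ) : ℝ) := by push_cast; linarith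
      exact ⟨m, by exact_mod_cast h5⟩
    rw [geom_sum_eq hw1, hwN]
    simp [hdvd]

lemma tau_norm_pow_le (hr0 : 0 ≤ r) (hr1 : r < 1) (hC : ∀ n, ‖T ^ n‖ ≤ C * r ^ n)
    {Hs : ℝ} (hHs : ∀ ω : ℝ, ‖resAux T ω‖ ≤ Hs) (k : ℕ) : ‖T ^ k‖ ≤ Hs := by
  have hC0 : 0 ≤ C := le_trans (norm_nonneg (1:𝔸)) (by simpa using hC 0)
  refine le_of_forall_pos_le_add (fun ε hε => ?_)
  obtain ⟨N, hkN, hNε⟩ : ∃ N : ℕ, k < N ∧ C * r ^ N / (1 - r) < ε := by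
    have htend : Tendsto (fun N : ℕ => C * r ^ N / (1 - r)) atTop (𝓝 0) := by
      have h1 := (tendsto_pow_atTop_nhds_zero_of_lt_one hr0 hr1).const_mul C
      simpa using h1.div_const (1 - r)
    obtain ⟨N, hN⟩ := ((htend.eventually_lt_const hε).and (eventually_gt_atTop k)).exists
    exact ⟨N, hN.2, hN.1⟩
  have hN0 : 0 < N := Nat.lt_of_le_of_lt (Nat.zero_le k) hkN
  have hNne : (N:ℝ) ≠ 0 := Nat.cast_ne_zero.mpr hN0.ne'
  have hNneC : (N:ℂ) ≠ 0 := Nat.cast_ne_zero.mpr hN0.ne'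
  set θ : ℝ := 2 * Real.pi / N with hθ
  set S : 𝔸 := (N:ℂ)⁻¹ • ∑ j ∈ Finset.range N,
    Complex.exp ((((k:ℝ)+1) * (j*θ) : ℝ) * I) • resAux T (j*θ) with hS
  -- Step 1 : ‖S‖ ≤ Hs
  have hS_norm : ‖S‖ ≤ Hs := by
    have h1 : ‖∑ j ∈ Finset.range N,
        Complex.exp ((((k:ℝ)+1) * (j*θ) : ℝ) * I) • resAux T (j*θ)‖ ≤ N * Hs := by
      refine le_trans (norm_sum_le _ _) ?_
      have : ∀ j ∈ Finset.range N,
          ‖Complex.exp ((((k:ℝ)+1) * (j*θ) : ℝ) * I) • resAux T (j*θ)‖ ≤ Hs := by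
        intro j _
        rw [norm_smul, Complex.norm_exp_ofReal_mul_I, one_mul]
        exact hHs _
      calc ∑ j ∈ Finset.range N, ‖Complex.exp ((((k:ℝ)+1) * (j*θ) : ℝ) * I) • resAux T (j*θ)‖
          ≤ ∑ _j ∈ Finset.range N, Hs := Finset.sum_le_sum this
        _ = N * Hs := by simp [mul_comm]
    rw [hS, norm_smul, norm_inv, Complex.norm_natCast]
    calc (N:ℝ)⁻¹ * ‖∑ j ∈ Finset.range N,
          Complex.exp ((((k:ℝ)+1) * (j*θ) : ℝ) * I) • resAux T (j*θ)‖
        ≤ (N:ℝ)⁻¹ * (N * Hs) := by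
          refine mul_le_mul_of_nonneg_left h1 (by positivity)
      _ = Hs := by field_simp
  -- coefficients
  set c : ℕ → ℂ := fun n => Complex.exp (((((k:ℤ)-(n:ℤ)) : ℝ) * θ : ℝ) * I) with hc
  have hcnorm : ∀ n j : ℕ, ‖(c n) ^ j‖ = 1 := by
    intro n j
    rw [norm_pow, hc, Complex.norm_exp_ofReal_mul_I, one_pow]
  -- Step 2 : each term of the average is a tsum
  have hterm : ∀ j : ℕ, Complex.exp ((((k:ℝ)+1) * (j*θ) : ℝ) * I) • resAux T (j*θ)
      = ∑' n : ℕ, ((c n) ^ j) • T ^ n := by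
    intro j
    rw [resAux, ← Summable.tsum_const_smul _ (summable_aux hr0 hr1 hC _
      (fun n => norm_exp_real_mul_I_pow (j*θ) (n+1)))]
    refine tsum_congr (fun n => ?_)
    rw [smul_smul]
    congr 1
    rw [← Complex.exp_nat_mul, ← Complex.exp_nat_mul, ← Complex.exp_add]
    congr 1
    push_cast
    ring
  -- coefficient sums (roots of unity)
  set d : ℕ → ℂ := fun n => if (N:ℤ) ∣ ((k:ℤ) - (n:ℤ)) then (N:ℂ) else 0 with hd
  have hsum_cj : ∀ j : ℕ, Summable (fun n => (c n) ^ j • T ^ n) :=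
    fun j => summable_aux hr0 hr1 hC _ (fun n => hcnorm n j)
  have hsum_d : Summable (fun n => d n • T ^ n) := by
    refine Summable.of_norm_bounded (g := fun n => (N:ℝ) * (C * r ^ n))
      (((summable_geometric_of_lt_one hr0 hr1).mul_left C).mul_left _) (fun n => ?_)
    rw [norm_smul]
    refine mul_le_mul ?_ (hC n) (norm_nonneg _) (by positivity)
    rw [hd]
    by_cases h : (N:ℤ) ∣ ((k:ℤ) - (n:ℤ)) <;> simp [h]
  have hcj : ∀ n : ℕ, ∑ j ∈ Finset.range N, (c n) ^ j = d n := by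
    intro n
    have h := root_sum N hN0 ((k:ℤ) - (n:ℤ))
    simp only [hc, hd]
    rw [hθ, ← h]
    refine Finset.sum_congr rfl (fun j _ => ?_)
    congr 2
    push_cast
    ring
  have hsum_eq : S = ∑' n : ℕ, ((N:ℂ)⁻¹ * d n) • T ^ n := by
    rw [hS]
    have h1 : ∑ j ∈ Finset.range N, Complex.exp ((((k:ℝ)+1) * (j*θ) : ℝ) * I) • resAux T (j*θ)
        = ∑' n : ℕ, d n • T ^ n := by
      rw [Finset.sum_congr rfl (fun j _ => hterm j), ← Summable.tsum_finsetSum (fun j _ => hsum_cj j)]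
      refine tsum_congr (fun n => ?_)
      rw [← Finset.sum_smul, hcj n]
    rw [h1, ← Summable.tsum_const_smul _ hsum_d]
    exact tsum_congr (fun n => by rw [smul_smul])
  have hsum_ind : S = ∑' n : ℕ,
      (if (N:ℤ) ∣ ((k:ℤ) - (n:ℤ)) then (1:ℂ) else 0) • T ^ n := by
    rw [hsum_eq]
    refine tsum_congr (fun n => ?_)
    congr 1
    rw [hd]
    by_cases h : (N:ℤ) ∣ ((k:ℤ) - (n:ℤ)) <;> simp [h, inv_mul_cancel₀ hNneC]
  -- reindexing along n = k + m * N
  have hg_inj : Function.Injective (fun m : ℕ => k + m * N) := by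
    intro a b hab
    simp only at hab
    exact Nat.eq_of_mul_eq_mul_right hN0 (Nat.add_left_cancel hab)
  set f : ℕ → 𝔸 := fun n => (if (N:ℤ) ∣ ((k:ℤ) - (n:ℤ)) then (1:ℂ) else 0) • T ^ n with hf
  have hsupp : Function.support f ⊆ Set.range (fun m : ℕ => k + m * N) := by
    intro n hn
    rw [Function.mem_support] at hn
    have hdvd : (N:ℤ) ∣ ((k:ℤ) - (n:ℤ)) := by
      by_contra h
      apply hn
      rw [hf]
      simp [h]
    obtain ⟨t, ht⟩ := hdvd
    have h2 : (0:ℤ) ≤ (n:ℤ) := Int.natCast_nonneg n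
    have h3 : (k:ℤ) < (N:ℤ) := by exact_mod_cast hkN
    have htn : t ≤ 0 := by
      by_contra hlt
      push_neg at hlt
      have h1 : (N:ℤ) * 1 ≤ (N:ℤ) * t := by
        refine mul_le_mul_of_nonneg_left (by omega) (by positivity)
      linarith
    refine ⟨(-t).toNat, ?_⟩
    simp only
    have htt : (((-t).toNat : ℕ) : ℤ) = -t := Int.toNat_of_nonneg (by omega)
    have h4 : ((k + (-t).toNat * N : ℕ) : ℤ) = (n:ℤ) := by
      push_cast [htt]
      linear_combination ht
    exact_mod_cast h4
  have hsum_shift : Summable (fun m : ℕ => T ^ (k + m * N)) := by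
    refine Summable.of_norm_bounded (g := fun m => (C * r ^ k) * (r ^ N) ^ m) ?_ (fun m => ?_)
    · exact Summable.mul_left _
        (summable_geometric_of_lt_one (by positivity) (pow_lt_one₀ hr0 hr1 hN0.ne'))
    · calc ‖T ^ (k + m * N)‖ ≤ C * r ^ (k + m * N) := hC _
        _ = (C * r ^ k) * (r ^ N) ^ m := by rw [pow_add, pow_mul]; ring
  have hS_tsum : S = ∑' m : ℕ, T ^ (k + m * N) := by
    rw [hsum_ind, ← Function.Injective.tsum_eq hg_inj hsupp]
    refine tsum_congr (fun m => ?_)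
    rw [hf]
    simp only
    rw [if_pos ⟨-(m:ℤ), by push_cast; ring⟩, one_smul]
  -- tail estimate
  have hsn : Summable (fun m : ℕ => ‖T ^ (k + (m+1) * N)‖) := by
    refine Summable.of_nonneg_of_le (fun _ => norm_nonneg _) (fun m => ?_)
      (Summable.mul_left ((C * r ^ k * r ^ N))
        (summable_geometric_of_lt_one (by positivity) (pow_lt_one₀ hr0 hr1 hN0.ne')))
    calc ‖T ^ (k + (m+1) * N)‖ ≤ C * r ^ (k + (m+1) * N) := hC _
      _ = (C * r ^ k * r ^ N) * (r ^ N) ^ m := by rw [pow_add, pow_mul, pow_succ]; ring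
  have htail : Summable (fun m : ℕ => T ^ (k + (m+1) * N)) :=
    Summable.of_norm hsn
  have hsplit : S = T ^ k + ∑' m : ℕ, T ^ (k + (m+1) * N) := by
    rw [hS_tsum, Summable.tsum_eq_zero_add hsum_shift]
    simp
  have hrN_le : r ^ N ≤ r := pow_le_of_le_one hr0 hr1.le hN0.ne'
  have h1r : (0:ℝ) < 1 - r := by linarith
  have h1rN : (0:ℝ) < 1 - r ^ N := by
    have := pow_lt_one₀ hr0 hr1 hN0.ne'
    linarith
  have htail_norm : ‖∑' m : ℕ, T ^ (k + (m+1) * N)‖ ≤ C * r ^ N / (1 - r) := by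
    refine le_trans (norm_tsum_le_tsum_norm hsn) ?_
    have h2 : ∑' m : ℕ, ‖T ^ (k + (m+1) * N)‖
        ≤ ∑' m : ℕ, (C * r ^ N) * (r ^ N) ^ m := by
      refine Summable.tsum_le_tsum (fun m => ?_) hsn
        (Summable.mul_left _
          (summable_geometric_of_lt_one (by positivity) (pow_lt_one₀ hr0 hr1 hN0.ne')))
      calc ‖T ^ (k + (m+1) * N)‖ ≤ C * r ^ (k + (m+1) * N) := hC _
        _ = (C * r ^ k * r ^ N) * (r ^ N) ^ m := by rw [pow_add, pow_mul, pow_succ]; ring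
        _ ≤ (C * 1 * r ^ N) * (r ^ N) ^ m := by
            have hk1 : r ^ k ≤ 1 := pow_le_one₀ hr0 hr1.le
            have hck : C * r ^ k ≤ C * 1 := by nlinarith
            have h5 : (C * r ^ k) * (r ^ N * (r ^ N) ^ m) ≤ (C * 1) * (r ^ N * (r ^ N) ^ m) :=
              mul_le_mul_of_nonneg_right hck (by positivity)
            linarith [h5]
        _ = (C * r ^ N) * (r ^ N) ^ m := by ring
    refine h2.trans ?_
    rw [tsum_mul_left, tsum_geometric_of_lt_one (by positivity) (pow_lt_one₀ hr0 hr1 hN0.ne')]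
    rw [div_eq_mul_inv]
    have hinv : (1 - r ^ N)⁻¹ ≤ (1 - r)⁻¹ := by
      apply inv_anti₀ h1r
      linarith
    have hCrN : (0:ℝ) ≤ C * r ^ N := by positivity
    nlinarith
  calc ‖T ^ k‖ = ‖S - (S - T ^ k)‖ := by rw [sub_sub_cancel]
    _ ≤ ‖S‖ + ‖S - T ^ k‖ := norm_sub_le _ _
    _ ≤ Hs + ε := by
        refine add_le_add hS_norm ?_
        have heq : S - T ^ k = ∑' m : ℕ, T ^ (k + (m+1) * N) := by
          rw [hsplit, add_sub_cancel_left]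
        rw [heq]
        exact le_of_lt (lt_of_le_of_lt htail_norm hNε)


end Abstract


section Geom
variable {𝔸 : Type*} [NormedRing 𝔸] [NormedAlgebra ℂ 𝔸] [CompleteSpace 𝔸] [Nontrivial 𝔸]

lemma geom_of_spectrum (T : 𝔸) (h : ∀ z ∈ spectrum ℂ T, ‖z‖ < 1) :
    ∃ C r : ℝ, 0 ≤ r ∧ r < 1 ∧ ∀ n, ‖T ^ n‖ ≤ C * r ^ n := by
  have h1 : spectralRadius ℂ T < 1 := by
    have h2 : ∀ z ∈ spectrum ℂ T, ‖z‖₊ < (1:ℝ≥0) := fun z hz => by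
      have := h z hz
      exact_mod_cast this
    have h3 := spectrum.spectralRadius_lt_of_forall_lt (a := T) h2
    simpa using h3
  obtain ⟨u, hu1, hu2⟩ := ENNReal.lt_iff_exists_nnreal_btwn.mp h1
  have hu0 : 0 < u := ENNReal.coe_pos.mp (lt_of_le_of_lt zero_le hu1)
  have hu3 : (u:ℝ) < 1 := by exact_mod_cast hu2
  have hu0' : (0:ℝ) < u := hu0
  have hev := (spectrum.pow_nnnorm_pow_one_div_tendsto_nhds_spectralRadius T).eventually_lt_const hu1
  obtain ⟨N₀, hN₀⟩ := Filter.eventually_atTop.mp hev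
  have hpow : ∀ n, max N₀ 1 ≤ n → ‖T ^ n‖ ≤ (u:ℝ) ^ n := by
    intro n hn
    have hn1 : 1 ≤ n := le_trans (le_max_right _ _) hn
    have hnn : ((n:ℝ)) ≠ 0 := Nat.cast_ne_zero.mpr (by omega)
    have h4 := hN₀ n (le_trans (le_max_left _ _) hn)
    have h5 := ENNReal.rpow_le_rpow h4.le (by positivity : (0:ℝ) ≤ (n:ℝ))
    rw [← ENNReal.rpow_mul, one_div, inv_mul_cancel₀ hnn, ENNReal.rpow_one] at h5
    rw [← ENNReal.coe_rpow_of_nonneg u (by positivity)] at h5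
    have h6 : ‖T ^ n‖₊ ≤ u ^ ((n:ℝ)) := ENNReal.coe_le_coe.mp h5
    have h7 : ‖T ^ n‖ ≤ ((u ^ ((n:ℝ)) : ℝ≥0) : ℝ) := by exact_mod_cast h6
    rwa [NNReal.coe_rpow, Real.rpow_natCast] at h7
  set M := max N₀ 1 with hM
  set C : ℝ := 1 + ∑ i ∈ Finset.range M, ‖T ^ i‖ / (u:ℝ) ^ i with hC
  have hC1 : (1:ℝ) ≤ C := by
    rw [hC]
    have : (0:ℝ) ≤ ∑ i ∈ Finset.range M, ‖T ^ i‖ / (u:ℝ) ^ i :=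
      Finset.sum_nonneg (fun i _ => by positivity)
    linarith
  refine ⟨C, u, by positivity, hu3, fun n => ?_⟩
  by_cases hn : M ≤ n
  · calc ‖T ^ n‖ ≤ (u:ℝ) ^ n := hpow n hn
      _ = 1 * (u:ℝ) ^ n := (one_mul _).symm
      _ ≤ C * (u:ℝ) ^ n := by
          refine mul_le_mul_of_nonneg_right hC1 (by positivity)
  · push_neg at hn
    have hmem : n ∈ Finset.range M := Finset.mem_range.mpr hn
    have h8 : ‖T ^ n‖ / (u:ℝ) ^ n ≤ ∑ i ∈ Finset.range M, ‖T ^ i‖ / (u:ℝ) ^ i :=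
      Finset.single_le_sum (f := fun i => ‖T ^ i‖ / (u:ℝ) ^ i) (fun i _ => by positivity) hmem
    have h9 : ‖T ^ n‖ / (u:ℝ) ^ n ≤ C := by rw [hC]; linarith
    have h10 : (0:ℝ) < (u:ℝ) ^ n := by positivity
    calc ‖T ^ n‖ = (‖T ^ n‖ / (u:ℝ) ^ n) * (u:ℝ) ^ n := by field_simp
      _ ≤ C * (u:ℝ) ^ n := mul_le_mul_of_nonneg_right h9 (le_of_lt h10)

end Geom


lemma opNorm_nonneg {𝕜 : Type*} [RCLike 𝕜] {m n : Type*} [Fintype m] [Fintype n]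
    [DecidableEq n] (M : Matrix m n 𝕜) : 0 ≤ opNorm M := norm_nonneg _

lemma opNorm_real_le_complex {d : ℕ} (M : Matrix (Fin d) (Fin d) ℝ) :
    opNorm M ≤ opNorm (M.map Complex.ofReal) := by
  rw [opNorm, opNorm]
  refine ContinuousLinearMap.opNorm_le_bound _ (norm_nonneg _) (fun x => ?_)
  set xc : EuclideanSpace ℂ (Fin d) :=
    (WithLp.equiv 2 (Fin d → ℂ)).symm (fun i => ((WithLp.equiv 2 (Fin d → ℝ) x) i : ℂ)) with hxc
  have hxnorm : ‖xc‖ = ‖x‖ := by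
    rw [EuclideanSpace.norm_eq, EuclideanSpace.norm_eq]
    congr 1
    refine Finset.sum_congr rfl (fun i _ => ?_)
    rw [hxc]
    simp [WithLp.equiv_symm_apply, Complex.norm_real]
  have happ : ∀ i, ((Matrix.toEuclideanLin (M.map Complex.ofReal)).toContinuousLinearMap xc) i
      = (((Matrix.toEuclideanLin M).toContinuousLinearMap x) i : ℂ) := by
    intro i
    simp only [LinearMap.coe_toContinuousLinearMap', Matrix.toEuclideanLin_apply]
    rw [hxc]
    simp only [WithLp.equiv_symm_apply, Equiv.apply_symm_apply]
    simp only [Matrix.mulVec, dotProduct, Matrix.map_apply]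
    push_cast
    rfl
  have hnorm_eq : ‖(Matrix.toEuclideanLin M).toContinuousLinearMap x‖
      = ‖(Matrix.toEuclideanLin (M.map Complex.ofReal)).toContinuousLinearMap xc‖ := by
    rw [EuclideanSpace.norm_eq, EuclideanSpace.norm_eq]
    congr 1
    refine Finset.sum_congr rfl (fun i _ => ?_)
    rw [happ i, Complex.norm_real]
  rw [hnorm_eq, ← hxnorm]
  exact ContinuousLinearMap.le_opNorm _ _

section Main
open Complex Filter Topology
open scoped Matrix.Norms.L2Operator

/-- if the real matrix `A` has spectral radius strictly less than `ρ < 1`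
(with `ρ > 0`), then `τ(A, ρ) := sup_k ‖Aᵏ‖_op ρ^{−k}` is at most the H-infinity norm
`H := sup_ω ‖(e^{iω}I − ρ⁻¹A)⁻¹‖_op` of the rescaled matrix `ρ⁻¹A`; i.e.
`‖Aᵏ‖_op ≤ H ρᵏ` for every `k`. -/
theorem tau_le_hinf {d : ℕ} (A : Matrix (Fin d) (Fin d) ℝ) (ρ : ℝ)
    (hρ0 : 0 < ρ) (hρ1 : ρ < 1)
    (hstab : ∀ z ∈ spectrum ℂ (A.map Complex.ofReal), ‖z‖ < ρ)
    (H : ℝ)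
    (hH : H = ⨆ ω : ℝ, opNorm
      ((Complex.exp ((ω : ℂ) * Complex.I) • (1 : Matrix (Fin d) (Fin d) ℂ)
          - (ρ⁻¹ : ℂ) • A.map Complex.ofReal)⁻¹)) :
    ∀ k : ℕ, opNorm (A ^ k) ≤ H * ρ ^ k := by
  intro k
  by_cases hd : d = 0
  · subst hd
    have h0 : opNorm (A ^ k) = 0 := by
      rw [opNorm]
      have hz : (Matrix.toEuclideanLin (A ^ k)).toContinuousLinearMap = 0 := by
        ext x i
        exact i.elim0
      rw [hz, norm_zero]
    rw [h0]
    refine mul_nonneg ?_ (by positivity)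
    rw [hH]
    exact Real.iSup_nonneg (fun ω => norm_nonneg _)
  · have hd0 : 0 < d := Nat.pos_of_ne_zero hd
    haveI : Nonempty (Fin d) := ⟨⟨0, hd0⟩⟩
    haveI : Nontrivial (Matrix (Fin d) (Fin d) ℂ) := by
      refine ⟨⟨0, 1, fun hcon => ?_⟩⟩
      have := congrFun (congrFun hcon ⟨0, hd0⟩) ⟨0, hd0⟩
      simp [Matrix.one_apply] at this
    set T : Matrix (Fin d) (Fin d) ℂ := (ρ⁻¹ : ℂ) • A.map Complex.ofReal with hT
    have hρne : ((ρ : ℂ))⁻¹ ≠ 0 :=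
      inv_ne_zero (by exact_mod_cast hρ0.ne')
    -- spectrum bound
    have hz : ∀ z ∈ spectrum ℂ T, ‖z‖ < 1 := by
      intro z hzmem
      set uC : ℂˣ := Units.mk0 ((ρ : ℂ))⁻¹ hρne with huC
      have hsm : T = uC • A.map Complex.ofReal := by
        rw [hT, Units.smul_def]
        rfl
      rw [hsm, spectrum.unit_smul_eq_smul] at hzmem
      obtain ⟨w, hw, rfl⟩ := hzmem
      have hwlt := hstab w hw
      have hval : ‖((uC : ℂ)) • w‖ = ρ⁻¹ * ‖w‖ := by
        rw [norm_smul]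
        congr 1
        rw [huC]
        simp only [Units.val_mk0, norm_inv, Complex.norm_real]
        rw [Real.norm_of_nonneg hρ0.le]
      show ‖((uC : ℂ)) • w‖ < 1
      rw [hval]
      calc ρ⁻¹ * ‖w‖ < ρ⁻¹ * ρ := by
            refine mul_lt_mul_of_pos_left hwlt (by positivity)
        _ = 1 := inv_mul_cancel₀ hρ0.ne'
    obtain ⟨C, r, hr0, hr1, hC⟩ := geom_of_spectrum T hz
    -- matrix inverse = Ring.inverse = resAux
    have hres : ∀ ω : ℝ,
        (Complex.exp ((ω : ℂ) * Complex.I) • (1 : Matrix (Fin d) (Fin d) ℂ) - T)⁻¹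
          = resAux T ω := by
      intro ω
      rw [Matrix.nonsing_inv_eq_ringInverse]
      exact ring_inverse_eq_resAux hr0 hr1 hC ω
    have hopn : ∀ ω : ℝ,
        opNorm ((Complex.exp ((ω : ℂ) * Complex.I) • (1 : Matrix (Fin d) (Fin d) ℂ) - T)⁻¹)
          = ‖resAux T ω‖ := by
      intro ω
      rw [hres ω]
      rfl
    have hbdd : BddAbove (Set.range fun ω : ℝ =>
        opNorm ((Complex.exp ((ω : ℂ) * Complex.I) • (1 : Matrix (Fin d) (Fin d) ℂ) - T)⁻¹)) := by
      refine ⟨C / (1 - r), ?_⟩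
      rintro x ⟨ω, rfl⟩
      show opNorm ((Complex.exp ((ω : ℂ) * Complex.I) • (1 : Matrix (Fin d) (Fin d) ℂ) - T)⁻¹)
        ≤ C / (1 - r)
      rw [hopn ω]
      exact norm_resAux_le hr0 hr1 hC ω
    have hHs : ∀ ω : ℝ, ‖resAux T ω‖ ≤ H := by
      intro ω
      rw [hH, ← hopn ω]
      exact le_ciSup hbdd ω
    have hkey : ‖T ^ k‖ ≤ H := tau_norm_pow_le hr0 hr1 hC hHs k
    -- translate back to A ^ k
    have hTk : T ^ k = ((ρ : ℂ))⁻¹ ^ k • ((A ^ k).map Complex.ofReal) := by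
      rw [hT, smul_pow]
      congr 1
      have h2 := map_pow (Complex.ofRealHom.mapMatrix (m := Fin d)) A k
      exact h2.symm
    have hnormTk : ‖T ^ k‖ = (ρ⁻¹) ^ k * ‖(A ^ k).map Complex.ofReal‖ := by
      rw [hTk, norm_smul, norm_pow, norm_inv, Complex.norm_real, Real.norm_of_nonneg hρ0.le]
    have hfin : ‖(A ^ k).map Complex.ofReal‖ ≤ H * ρ ^ k := by
      have h3 : (ρ⁻¹) ^ k * ‖(A ^ k).map Complex.ofReal‖ ≤ H := by
        rw [← hnormTk]; exact hkey
      calc ‖(A ^ k).map Complex.ofReal‖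
          = ρ ^ k * ((ρ⁻¹) ^ k * ‖(A ^ k).map Complex.ofReal‖) := by
            rw [← mul_assoc, ← mul_pow, mul_inv_cancel₀ hρ0.ne', one_pow, one_mul]
        _ ≤ ρ ^ k * H := mul_le_mul_of_nonneg_left h3 (by positivity)
        _ = H * ρ ^ k := mul_comm _ _
    calc opNorm (A ^ k) ≤ opNorm ((A ^ k).map Complex.ofReal) := opNorm_real_le_complex _
      _ = ‖(A ^ k).map Complex.ofReal‖ := rfl
      _ ≤ H * ρ ^ k := hfin

end Main
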